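/- (Bounded-multiplier duality.) Let O_{γ} denote the maximum of Σ_i H((1+x_i)/2) over x ∈ [-1,1]^n satisfying |a_j·x - t_j| ≤ γn for j ∈ [m] (value -∞ if infeasible), and similarly O_{2γ} with tolerance 2γn. Let O*_{γ,K} = min_{y∈[0,K/γ]^{2m}} max_{x∈[-1,1]^n} L(x,y) be the optimum of the dual with multipliers bounded by K/γ. Then O_γ ≤ O*_{γ,K} ≤ max{O_{2γ}, -(K-1)n}. -/

import Mathlib

open Finset Real

/-- The binary entropy function. -/
noncomputable def binH (p : ℝ) : ℝ := -(p * Real.log p) - (1 - p) * Real.log (1 - p)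

/-- The maximum entropy over `x ∈ [-1,1]^n` satisfying `|a_j·x - t_j| ≤ γ'n` for all `j`
(`⊥` if infeasible). -/
noncomputable def maxEntVal (n m : ℕ) (a : Fin m → Fin n → ℝ) (t : Fin m → ℝ) (γ' : ℝ) : EReal :=
  sSup {v : EReal | ∃ x : Fin n → ℝ, (∀ i, |x i| ≤ 1) ∧
    (∀ j, |(∑ i, a j i * x i) - t j| ≤ γ' * n) ∧
    v = ((∑ i, binH ((1 + x i) / 2) : ℝ) : EReal)}

/-- The optimum of the dual program with multipliers bounded by `K/γ`; the two-sided
constraints `|a_j·x - t_j| ≤ γn` are written as two one-sided affine constraints with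
multipliers `y⁺, y⁻`. -/
noncomputable def boundedDualVal (n m : ℕ) (a : Fin m → Fin n → ℝ) (t : Fin m → ℝ)
    (γ K : ℝ) : ℝ :=
  sInf {v : ℝ | ∃ yp ym : Fin m → ℝ,
    (∀ j, yp j ∈ Set.Icc (0:ℝ) (K / γ)) ∧ (∀ j, ym j ∈ Set.Icc (0:ℝ) (K / γ)) ∧
    v = ⨆ x : {x : Fin n → ℝ // ∀ i, |x i| ≤ 1},
      ((∑ i, binH ((1 + x.1 i) / 2))
        - ∑ j, yp j * ((∑ i, a j i * x.1 i) - t j - γ * n)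
        - ∑ j, ym j * (t j - (∑ i, a j i * x.1 i) - γ * n))}

lemma binH_eq (p : ℝ) : binH p = Real.binEntropy p := by
  simp only [binH, Real.binEntropy, Real.log_inv]
  ring

lemma binH_le_log_two (p : ℝ) : binH p ≤ Real.log 2 := by
  rw [binH_eq]; exact Real.binEntropy_le_log_two

lemma binH_nonneg {p : ℝ} (h0 : 0 ≤ p) (h1 : p ≤ 1) : 0 ≤ binH p := by
  rw [binH_eq]; exact Real.binEntropy_nonneg h0 h1

lemma binH_concave : ConcaveOn ℝ (Set.Icc (0:ℝ) 1) binH := by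
  have h := Real.strictConcave_binEntropy.concaveOn
  have : binH = Real.binEntropy := funext binH_eq
  rw [this]; exact h

lemma log_two_le_one : Real.log 2 ≤ 1 := by
  have := Real.log_le_sub_one_of_pos (by norm_num : (0:ℝ) < 2)
  linarith


/-- Separation-based bounded-multiplier duality core lemma. -/
lemma minimax_core {n : ℕ} {ι : Type*} [Fintype ι] [DecidableEq ι]
    (X : Set (Fin n → ℝ)) (hXc : Convex ℝ X) (hXne : X.Nonempty)
    (f : (Fin n → ℝ) → ℝ) (hf : ConcaveOn ℝ X f)
    (g : ι → (Fin n → ℝ) → ℝ)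
    (hgaff : ∀ j, ∀ x₁ x₂ : Fin n → ℝ, ∀ p q : ℝ, p + q = 1 →
      g j (p • x₁ + q • x₂) = p * g j x₁ + q * g j x₂)
    (c M : ℝ) (hc : 0 ≤ c)
    (hpt : ∀ x ∈ X, f x ≤ M + c * ∑ j, max (g j x) 0) :
    ∃ y : ι → ℝ, (∀ j, y j ∈ Set.Icc 0 c) ∧ ∀ x ∈ X, f x - ∑ j, y j * g j x ≤ M := by
  classical
  set S : Set ((ι → ℝ) × ℝ) := {q | ∃ x ∈ X, (∀ j, q.1 j = g j x) ∧ q.2 ≤ f x} with hSdef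
  set D : Set ((ι → ℝ) × ℝ) := {q | M + c * ∑ j, max (q.1 j) 0 < q.2} with hDdef
  have hSconv : Convex ℝ S := by
    rintro q₁ ⟨x₁, hx₁, hq₁, hv₁⟩ q₂ ⟨x₂, hx₂, hq₂, hv₂⟩ p r hp hr hpr
    refine ⟨p • x₁ + r • x₂, hXc hx₁ hx₂ hp hr hpr, fun j => ?_, ?_⟩
    · have : (p • q₁ + r • q₂).1 j = p * q₁.1 j + r * q₂.1 j := by
        simp [Prod.fst_add, Prod.smul_fst]
      rw [this, hgaff j x₁ x₂ p r hpr, hq₁ j, hq₂ j]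
    · have hcc := hf.2 hx₁ hx₂ hp hr hpr
      simp only [smul_eq_mul] at hcc
      have h1 : p * q₁.2 ≤ p * f x₁ := by nlinarith
      have h2 : r * q₂.2 ≤ r * f x₂ := by nlinarith
      have hsnd : (p • q₁ + r • q₂).2 = p * q₁.2 + r * q₂.2 := by
        simp [Prod.snd_add, Prod.smul_snd]
      rw [hsnd]; linarith
  have hmaxle : ∀ (p r u v : ℝ), 0 ≤ p → 0 ≤ r →
      max (p * u + r * v) 0 ≤ p * max u 0 + r * max v 0 := by
    intro p r u v hp hr
    have h1 : p * u ≤ p * max u 0 := by nlinarith [le_max_left u 0]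
    have h2 : r * v ≤ r * max v 0 := by nlinarith [le_max_left u 0, le_max_left v 0]
    have h3 : 0 ≤ p * max u 0 + r * max v 0 := by positivity
    exact max_le (by linarith) h3
  have hDconv : Convex ℝ D := by
    rintro q₁ hq₁ q₂ hq₂ p r hp hr hpr
    simp only [hDdef, Set.mem_setOf_eq] at hq₁ hq₂ ⊢
    have hsum : ∑ j, max ((p • q₁ + r • q₂).1 j) 0 ≤
        p * ∑ j, max (q₁.1 j) 0 + r * ∑ j, max (q₂.1 j) 0 := by
      rw [Finset.mul_sum, Finset.mul_sum, ← Finset.sum_add_distrib]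
      refine Finset.sum_le_sum fun j _ => ?_
      have : (p • q₁ + r • q₂).1 j = p * q₁.1 j + r * q₂.1 j := by
        simp [Prod.fst_add, Prod.smul_fst]
      rw [this]
      exact hmaxle p r (q₁.1 j) (q₂.1 j) hp hr
    have hsnd : (p • q₁ + r • q₂).2 = p * q₁.2 + r * q₂.2 := by
      simp [Prod.snd_add, Prod.smul_snd]
    rw [hsnd]
    have e1 : M + c * (p * ∑ j, max (q₁.1 j) 0 + r * ∑ j, max (q₂.1 j) 0)
        = p * (M + c * ∑ j, max (q₁.1 j) 0) + r * (M + c * ∑ j, max (q₂.1 j) 0) := by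
      rw [show r = 1 - p by linarith]; ring
    have key : M + c * ∑ j, max ((p • q₁ + r • q₂).1 j) 0
        ≤ p * (M + c * ∑ j, max (q₁.1 j) 0) + r * (M + c * ∑ j, max (q₂.1 j) 0) := by
      rw [← e1]; nlinarith
    rcases eq_or_lt_of_le hp with hp0 | hp0
    · have hr1 : r = 1 := by linarith
      have : p * (M + c * ∑ j, max (q₁.1 j) 0) + r * (M + c * ∑ j, max (q₂.1 j) 0)
          < p * q₁.2 + r * q₂.2 := by rw [← hp0, hr1]; simpa using hq₂
      linarith
    · have h1 : p * (M + c * ∑ j, max (q₁.1 j) 0) < p * q₁.2 := by nlinarith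
      have h2 : r * (M + c * ∑ j, max (q₂.1 j) 0) ≤ r * q₂.2 := by nlinarith
      linarith
  have hDopen : IsOpen D := by
    have hcont : Continuous fun q : (ι → ℝ) × ℝ => M + c * ∑ j, max (q.1 j) 0 :=
      continuous_const.add (continuous_const.mul (continuous_finset_sum _ fun j _ =>
        ((continuous_apply j).comp continuous_fst).max continuous_const))
    exact isOpen_lt hcont continuous_snd
  have hdisj : Disjoint D S := by
    rw [Set.disjoint_left]
    rintro q hqD ⟨x, hx, hq1, hq2⟩
    have hle : f x ≤ M + c * ∑ j, max (g j x) 0 := hpt x hx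
    simp only [hDdef, Set.mem_setOf_eq] at hqD
    have heq : ∑ j, max (q.1 j) 0 = ∑ j, max (g j x) 0 :=
      Finset.sum_congr rfl fun j _ => by rw [hq1 j]
    rw [heq] at hqD; linarith
  obtain ⟨φ, α, hD, hS⟩ := geometric_hahn_banach_open hDconv hDopen hSconv hdisj
  set w : ι → ℝ := fun j => φ (Pi.single j 1, 0) with hw
  set β : ℝ := φ (0, 1) with hβ
  have hφ : ∀ (u : ι → ℝ) (v : ℝ), φ (u, v) = (∑ j, w j * u j) + β * v := by
    intro u v
    have hsplit : ((u, v) : (ι → ℝ) × ℝ) = (u, 0) + (0, v) := by simp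
    have h2 : ((0, v) : (ι → ℝ) × ℝ) = v • ((0 : ι → ℝ), (1:ℝ)) := by simp
    have h1 : ((u, 0) : (ι → ℝ) × ℝ) = ∑ j, (u j) • ((Pi.single j 1 : ι → ℝ), (0:ℝ)) := by
      rw [Prod.ext_iff]
      constructor
      · rw [Prod.fst_sum]
        ext i
        simp [Pi.single_apply, Finset.sum_ite_eq' Finset.univ i u]
      · rw [Prod.snd_sum]; simp
    rw [hsplit, map_add, h1, h2, map_sum, map_smul]
    have e2 : φ (v • ((0 : ι → ℝ), (1:ℝ)))  = β * v := by
      rw [map_smul, smul_eq_mul, mul_comm]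
    rw [← map_smul, e2]
    congr 1
    exact Finset.sum_congr rfl fun j _ => by rw [map_smul, smul_eq_mul, mul_comm]
  have hDin : ∀ (u : ι → ℝ) (v : ℝ), M + c * ∑ j, max (u j) 0 < v →
      (∑ j, w j * u j) + β * v < α := by
    intro u v h; have := hD (u, v) h; rwa [hφ] at this
  have hSin : ∀ x ∈ X, α ≤ (∑ j, w j * g j x) + β * f x := by
    intro x hx
    have := hS ((fun j => g j x), f x) ⟨x, hx, fun j => rfl, le_rfl⟩
    rwa [hφ] at this
  have hβ0 : β ≤ 0 := by
    by_contra h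
    push_neg at h
    have key : ∀ v : ℝ, M < v → β * v < α := by
      intro v hv
      have := hDin 0 v (by simpa using hv)
      simpa using this
    have h1 := key (max (M + 1) ((α + 1) / β)) (lt_max_iff.2 (Or.inl (by linarith)))
    have h2 : α + 1 ≤ β * max (M + 1) ((α + 1) / β) := by
      rw [← div_le_iff₀' h]
      exact le_max_right _ _
    linarith
  have hu : ∀ u : ι → ℝ, (∑ j, w j * u j) + β * (M + c * ∑ j, max (u j) 0) ≤ α := by
    intro u
    have key : ∀ ε : ℝ, 0 < ε →
        (∑ j, w j * u j) + β * (M + c * ∑ j, max (u j) 0) ≤ α + (-β) * ε := by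
      intro ε hε
      have h0 := hDin u (M + c * ∑ j, max (u j) 0 + ε) (by linarith)
      have expand : (∑ j, w j * u j) + β * (M + c * ∑ j, max (u j) 0 + ε)
          = (∑ j, w j * u j) + β * (M + c * ∑ j, max (u j) 0) + β * ε := by ring
      rw [expand] at h0
      linarith
    by_contra h
    push_neg at h
    obtain ⟨L, hL⟩ : ∃ L : ℝ, L = (∑ j, w j * u j) + β * (M + c * ∑ j, max (u j) 0) := ⟨_, rfl⟩
    rw [← hL] at h
    have key' : ∀ ε : ℝ, 0 < ε → L ≤ α + (-β) * ε := by
      intro ε hε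
      have h0 := key ε hε
      rw [← hL] at h0
      exact h0
    rcases eq_or_lt_of_le hβ0 with hb | hb
    · have h1 := key' 1 one_pos
      rw [hb] at h1
      simp only [neg_zero, zero_mul, add_zero] at h1
      linarith
    · have h1 := key' ((L - α) / (-β * 2)) (by apply div_pos (by linarith) (by linarith))
      have hb2 : (-β) ≠ 0 := by intro h0; rw [neg_eq_zero] at h0; linarith
      have e : (-β) * ((L - α) / (-β * 2)) = (L - α) / 2 := by
        rw [← mul_div_assoc, mul_div_mul_left _ _ hb2]
      rw [e] at h1
      linarith
  have hβneg : β < 0 := by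
    rcases eq_or_lt_of_le hβ0 with hb | hb
    · exfalso
      have hw0 : ∀ u : ι → ℝ, (∑ j, w j * u j) ≤ α := by
        intro u
        have h1 := hu u
        rw [hb] at h1
        simpa using h1
      have hQ : ∑ j, w j * w j ≤ 0 := by
        by_contra hQ
        push_neg at hQ
        have hs := hw0 ((( |α| + 1) / (∑ j, w j * w j)) • w)
        have e : ∑ j, w j * (((|α| + 1) / (∑ j, w j * w j)) • w) j
            = (|α| + 1) / (∑ j, w j * w j) * (∑ j, w j * w j) := by
          rw [Finset.mul_sum]
          exact Finset.sum_congr rfl fun j _ => by simp only [Pi.smul_apply, smul_eq_mul]; ring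
        rw [e, div_mul_cancel₀ _ (by linarith : (∑ j, w j * w j) ≠ 0)] at hs
        have := abs_nonneg α
        have := le_abs_self α
        linarith
      have hwz : ∀ j, w j = 0 := by
        intro j
        have hnn : ∀ j ∈ Finset.univ, (0:ℝ) ≤ w j * w j := fun j _ => mul_self_nonneg _
        have := (Finset.sum_eq_zero_iff_of_nonneg hnn).1
          (le_antisymm hQ (Finset.sum_nonneg hnn)) j (Finset.mem_univ j)
        nlinarith [this]
      obtain ⟨x₀, hx₀⟩ := hXne
      have h1 := hSin x₀ hx₀
      have h2 := hDin 0 (M + 1) (by simp)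
      rw [hb] at h1 h2
      simp only [hwz, zero_mul, Finset.sum_const_zero, Pi.zero_apply, mul_zero,
        zero_add, add_zero] at h1 h2
      linarith
    · exact hb
  have hβne : β ≠ 0 := ne_of_lt hβneg
  set s : ℝ := (-β)⁻¹ with hs
  have hspos : 0 < s := by
    rw [hs]
    have : (0:ℝ) < -β := by linarith
    exact inv_pos.2 this
  have hsβ : s * β = -1 := by
    rw [hs, inv_neg, neg_mul, inv_mul_cancel₀ hβne]
  have hα0 : β * M ≤ α := by
    have := hu 0; simpa using this
  refine ⟨fun j => s * w j, fun j => ⟨?_, ?_⟩, ?_⟩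
  · have hwj : 0 ≤ w j := by
      by_contra hneg
      push_neg at hneg
      have hne : -w j ≠ 0 := by intro h0; rw [neg_eq_zero] at h0; linarith
      have key : ∀ tt : ℝ, 0 < tt → -tt * w j + β * M ≤ α := by
        intro tt htt
        have h0 := hu (Pi.single j (-tt))
        have e1 : ∑ k, w k * (Pi.single j (-tt) : ι → ℝ) k = -tt * w j := by
          rw [Finset.sum_eq_single j]
          · simp [Pi.single_apply]; ring
          · intro k _ hk; simp [Pi.single_apply, hk]
          · simp
        have e2 : ∑ k, max ((Pi.single j (-tt) : ι → ℝ) k) 0 = 0 := by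
          apply Finset.sum_eq_zero
          intro k _
          rcases eq_or_ne k j with rfl | hk
          · simp [Pi.single_apply]; linarith
          · simp [Pi.single_apply, hk]
        rw [e1, e2] at h0
        simpa using h0
      set tt := (α - β * M + 1) / (-w j) with htt
      have httpos : 0 < tt := by
        apply div_pos (by linarith) (by linarith)
      have e3 : tt * (-w j) = α - β * M + 1 := div_mul_cancel₀ _ hne
      have e4 : -tt * w j = tt * (-w j) := by ring
      have := key tt httpos
      linarith
    positivity
  · have hwj : w j ≤ (-β) * c := by
      by_contra hneg
      push_neg at hneg
      have key : ∀ tt : ℝ, 0 < tt → tt * w j + β * (M + c * tt) ≤ α := by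
        intro tt htt
        have h0 := hu (Pi.single j tt)
        have e1 : ∑ k, w k * (Pi.single j tt : ι → ℝ) k = tt * w j := by
          rw [Finset.sum_eq_single j]
          · simp [Pi.single_apply]; ring
          · intro k _ hk; simp [Pi.single_apply, hk]
          · simp
        have e2 : ∑ k, max ((Pi.single j tt : ι → ℝ) k) 0 = tt := by
          rw [Finset.sum_eq_single j]
          · simp [Pi.single_apply]; linarith
          · intro k _ hk; simp [Pi.single_apply, hk]
          · simp
        rw [e1, e2] at h0
        exact h0
      have hden : 0 < w j + β * c := by nlinarith
      set tt := (α - β * M + 1) / (w j + β * c) with htt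
      have := key tt (by apply div_pos (by linarith) hden)
      have e3 : tt * w j + β * (M + c * tt) = tt * (w j + β * c) + β * M := by ring
      rw [e3, htt, div_mul_cancel₀ _ (by linarith : w j + β * c ≠ 0)] at this
      linarith
    calc s * w j ≤ s * ((-β) * c) := by nlinarith
      _ = c := by rw [hs, ← mul_assoc, inv_mul_cancel₀ (by simpa using hβne : (-β) ≠ 0), one_mul]
  · intro x hx
    have h1 := hSin x hx
    have h2 : s * α ≤ s * ((∑ j, w j * g j x) + β * f x) := by nlinarith
    have e1 : s * ((∑ j, w j * g j x) + β * f x)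
        = (∑ j, (s * w j) * g j x) + (s * β) * f x := by
      simp only [mul_add, Finset.mul_sum, mul_assoc]
    rw [e1, hsβ] at h2
    have h3 : s * (β * M) ≤ s * α := by nlinarith
    have e2 : s * (β * M) = (s * β) * M := by ring
    rw [e2, hsβ] at h3
    linarith

/-- entropy sum -/
noncomputable def entS (n : ℕ) (x : Fin n → ℝ) : ℝ := ∑ i, binH ((1 + x i) / 2)

lemma entS_le (n : ℕ) (x : Fin n → ℝ) : entS n x ≤ n * Real.log 2 := by
  calc entS n x ≤ ∑ _i : Fin n, Real.log 2 :=
        Finset.sum_le_sum fun i _ => binH_le_log_two _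
    _ = n * Real.log 2 := by simp [Finset.sum_const, Finset.card_univ, nsmul_eq_mul]

lemma entS_nonneg (n : ℕ) (x : Fin n → ℝ) (hx : ∀ i, |x i| ≤ 1) : 0 ≤ entS n x := by
  refine Finset.sum_nonneg fun i _ => binH_nonneg ?_ ?_ <;>
    have := abs_le.1 (hx i) <;> [linarith [this.1]; linarith [this.2]]

lemma entS_concave (n : ℕ) :
    ConcaveOn ℝ {x : Fin n → ℝ | ∀ i, |x i| ≤ 1} (entS n) := by
  constructor
  · have : {x : Fin n → ℝ | ∀ i, |x i| ≤ 1}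
        = Set.pi Set.univ (fun _ : Fin n => Set.Icc (-1:ℝ) 1) := by
      ext x
      simp only [Set.mem_setOf_eq, Set.mem_pi, Set.mem_univ, true_implies, Set.mem_Icc, abs_le]
    rw [this]
    exact convex_pi fun i _ => convex_Icc _ _
  · intro x hx y hy p q hp hq hpq
    simp only [smul_eq_mul]
    rw [entS, entS, entS, Finset.mul_sum, Finset.mul_sum, ← Finset.sum_add_distrib]
    refine Finset.sum_le_sum fun i _ => ?_
    have hxi : (1 + x i) / 2 ∈ Set.Icc (0:ℝ) 1 := by
      have := abs_le.1 (hx i); constructor <;> [linarith [this.1]; linarith [this.2]]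
    have hyi : (1 + y i) / 2 ∈ Set.Icc (0:ℝ) 1 := by
      have := abs_le.1 (hy i); constructor <;> [linarith [this.1]; linarith [this.2]]
    have hcc := binH_concave.2 hxi hyi hp hq hpq
    simp only [smul_eq_mul] at hcc
    have e : (1 + (p • x + q • y) i) / 2 = p * ((1 + x i) / 2) + q * ((1 + y i) / 2) := by
      simp only [Pi.add_apply, Pi.smul_apply, smul_eq_mul]
      rw [show q = 1 - p by linarith]
      ring
    rw [e]
    exact hcc

theorem test_ok : True := trivial

/-- one-sided constraint functions -/
noncomputable def gPf (n m : ℕ) (a : Fin m → Fin n → ℝ) (t : Fin m → ℝ) (γ : ℝ)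
    (j : Fin m) (x : Fin n → ℝ) : ℝ := (∑ i, a j i * x i) - t j - γ * n

noncomputable def gMf (n m : ℕ) (a : Fin m → Fin n → ℝ) (t : Fin m → ℝ) (γ : ℝ)
    (j : Fin m) (x : Fin n → ℝ) : ℝ := t j - (∑ i, a j i * x i) - γ * n

/-- the Lagrangian -/
noncomputable def lagf (n m : ℕ) (a : Fin m → Fin n → ℝ) (t : Fin m → ℝ) (γ : ℝ)
    (yp ym : Fin m → ℝ) (x : Fin n → ℝ) : ℝ :=
  (∑ i, binH ((1 + x i) / 2))
    - ∑ j, yp j * gPf n m a t γ j x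
    - ∑ j, ym j * gMf n m a t γ j x

noncomputable def bndf (n m : ℕ) (a : Fin m → Fin n → ℝ) (t : Fin m → ℝ) (γ : ℝ)
    (j : Fin m) : ℝ := (∑ i, |a j i|) + |t j| + γ * n

lemma sumA_abs_le {n m : ℕ} (a : Fin m → Fin n → ℝ) (j : Fin m) (x : Fin n → ℝ)
    (hx : ∀ i, |x i| ≤ 1) : |∑ i, a j i * x i| ≤ ∑ i, |a j i| := by
  refine (abs_sum_le_sum_abs _ _).trans (Finset.sum_le_sum fun i _ => ?_)
  rw [abs_mul]
  exact mul_le_of_le_one_right (abs_nonneg _) (hx i)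

lemma gPf_abs_le {n m : ℕ} (a : Fin m → Fin n → ℝ) (t : Fin m → ℝ) {γ : ℝ}
    (hγn : 0 ≤ γ * (n:ℝ)) (j : Fin m) (x : Fin n → ℝ) (hx : ∀ i, |x i| ≤ 1) :
    |gPf n m a t γ j x| ≤ bndf n m a t γ j := by
  have h1 := abs_le.1 (sumA_abs_le a j x hx)
  have h2 := le_abs_self (t j)
  have h3 := neg_abs_le (t j)
  rw [gPf, bndf, abs_le]
  constructor <;> linarith

lemma gMf_abs_le {n m : ℕ} (a : Fin m → Fin n → ℝ) (t : Fin m → ℝ) {γ : ℝ}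
    (hγn : 0 ≤ γ * (n:ℝ)) (j : Fin m) (x : Fin n → ℝ) (hx : ∀ i, |x i| ≤ 1) :
    |gMf n m a t γ j x| ≤ bndf n m a t γ j := by
  have h1 := abs_le.1 (sumA_abs_le a j x hx)
  have h2 := le_abs_self (t j)
  have h3 := neg_abs_le (t j)
  rw [gMf, bndf, abs_le]
  constructor <;> linarith

lemma sum_mul_abs_le {m : ℕ} {y G B : Fin m → ℝ} {c : ℝ} (hc : 0 ≤ c)
    (hy : ∀ j, y j ∈ Set.Icc 0 c) (hG : ∀ j, |G j| ≤ B j) :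
    |∑ j, y j * G j| ≤ ∑ j, c * B j := by
  refine (abs_sum_le_sum_abs _ _).trans (Finset.sum_le_sum fun j _ => ?_)
  rw [abs_mul, abs_of_nonneg (hy j).1]
  exact mul_le_mul (hy j).2 (hG j) (abs_nonneg _) hc

/-- uniform bound for the Lagrangian -/
noncomputable def bigB (n m : ℕ) (a : Fin m → Fin n → ℝ) (t : Fin m → ℝ) (γ c : ℝ) : ℝ :=
  (n : ℝ) * Real.log 2 + ∑ j, c * bndf n m a t γ j + ∑ j, c * bndf n m a t γ j

lemma lag_le {n m : ℕ} (a : Fin m → Fin n → ℝ) (t : Fin m → ℝ) {γ c : ℝ}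
    (hγn : 0 ≤ γ * (n:ℝ)) (hc : 0 ≤ c) {yp ym : Fin m → ℝ}
    (hyp : ∀ j, yp j ∈ Set.Icc 0 c) (hym : ∀ j, ym j ∈ Set.Icc 0 c)
    (x : Fin n → ℝ) (hx : ∀ i, |x i| ≤ 1) :
    lagf n m a t γ yp ym x ≤ bigB n m a t γ c := by
  have h1 := abs_le.1 (sum_mul_abs_le hc hyp (fun j => gPf_abs_le a t hγn j x hx))
  have h2 := abs_le.1 (sum_mul_abs_le hc hym (fun j => gMf_abs_le a t hγn j x hx))
  have h3 := entS_le n x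
  rw [lagf, bigB]
  have : (∑ i, binH ((1 + x i) / 2)) = entS n x := rfl
  rw [this]
  linarith [h1.1, h2.1]

lemma lag_ge {n m : ℕ} (a : Fin m → Fin n → ℝ) (t : Fin m → ℝ) {γ c : ℝ}
    (hγn : 0 ≤ γ * (n:ℝ)) (hc : 0 ≤ c) {yp ym : Fin m → ℝ}
    (hyp : ∀ j, yp j ∈ Set.Icc 0 c) (hym : ∀ j, ym j ∈ Set.Icc 0 c)
    (x : Fin n → ℝ) (hx : ∀ i, |x i| ≤ 1) :
    -(bigB n m a t γ c) ≤ lagf n m a t γ yp ym x := by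
  have h1 := abs_le.1 (sum_mul_abs_le hc hyp (fun j => gPf_abs_le a t hγn j x hx))
  have h2 := abs_le.1 (sum_mul_abs_le hc hym (fun j => gMf_abs_le a t hγn j x hx))
  have h3 := entS_nonneg n x hx
  have h4 : (0:ℝ) ≤ (n : ℝ) * Real.log 2 := by
    have : (0:ℝ) ≤ Real.log 2 := Real.log_nonneg (by norm_num)
    positivity
  rw [lagf, bigB]
  have : (∑ i, binH ((1 + x i) / 2)) = entS n x := rfl
  rw [this]
  linarith [h1.2, h2.2]

lemma lag_bddAbove {n m : ℕ} (a : Fin m → Fin n → ℝ) (t : Fin m → ℝ) {γ c : ℝ}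
    (hγn : 0 ≤ γ * (n:ℝ)) (hc : 0 ≤ c) {yp ym : Fin m → ℝ}
    (hyp : ∀ j, yp j ∈ Set.Icc 0 c) (hym : ∀ j, ym j ∈ Set.Icc 0 c) :
    BddAbove (Set.range fun x : {x : Fin n → ℝ // ∀ i, |x i| ≤ 1} =>
      lagf n m a t γ yp ym x.1) := by
  refine ⟨bigB n m a t γ c, ?_⟩
  rintro v ⟨x, rfl⟩
  exact lag_le a t hγn hc hyp hym x.1 x.2

/-- bounded-multiplier duality: `O_γ ≤ O*_{γ,K} ≤ max{O_{2γ}, -(K-1)n}`. -/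
theorem bounded_multiplier_duality (n m : ℕ) (a : Fin m → Fin n → ℝ) (t : Fin m → ℝ)
    (γ K : ℝ) (hγ : 0 < γ) (hK : 0 < K) :
    maxEntVal n m a t γ ≤ ((boundedDualVal n m a t γ K : ℝ) : EReal) ∧
    ((boundedDualVal n m a t γ K : ℝ) : EReal)
      ≤ max (maxEntVal n m a t (2 * γ)) (((-((K - 1) * n) : ℝ)) : EReal) := by
  classical
  have hγn : 0 ≤ γ * (n:ℝ) := by positivity
  have hc0 : 0 ≤ K / γ := le_of_lt (div_pos hK hγ)
  haveI hne : Nonempty {x : Fin n → ℝ // ∀ i, |x i| ≤ 1} := ⟨⟨0, fun i => by simp⟩⟩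
  set X : Set (Fin n → ℝ) := {x | ∀ i, |x i| ≤ 1} with hX
  have hXne : X.Nonempty := ⟨0, fun i => by simp⟩
  set Q : Set ℝ := {v | ∃ yp ym : Fin m → ℝ,
    (∀ j, yp j ∈ Set.Icc (0:ℝ) (K / γ)) ∧ (∀ j, ym j ∈ Set.Icc (0:ℝ) (K / γ)) ∧
    v = ⨆ x : {x : Fin n → ℝ // ∀ i, |x i| ≤ 1}, lagf n m a t γ yp ym x.1} with hQ
  have hdual : boundedDualVal n m a t γ K = sInf Q := rfl
  have h0mem : ∀ j : Fin m, (0:ℝ) ∈ Set.Icc (0:ℝ) (K / γ) := fun j => Set.mem_Icc.2 ⟨le_rfl, hc0⟩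
  have hQne : Q.Nonempty :=
    ⟨_, 0, 0, fun j => h0mem j, fun j => h0mem j, rfl⟩
  have hQbdd : BddBelow Q := by
    refine ⟨-(bigB n m a t γ (K / γ)), ?_⟩
    rintro v ⟨yp, ym, hyp, hym, rfl⟩
    exact le_trans (lag_ge a t hγn hc0 hyp hym 0 (fun i => by simp))
      (le_ciSup (lag_bddAbove a t hγn hc0 hyp hym) ⟨0, fun i => by simp⟩)
  constructor
  · -- Part 1
    rw [maxEntVal]
    refine sSup_le ?_
    rintro v ⟨x, hx, hfeas, rfl⟩
    rw [EReal.coe_le_coe_iff, hdual]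
    refine le_csInf hQne ?_
    rintro v' ⟨yp, ym, hyp, hym, rfl⟩
    have hfx : (∑ i, binH ((1 + x i) / 2)) ≤ lagf n m a t γ yp ym x := by
      have h1 : ∑ j, yp j * gPf n m a t γ j x ≤ 0 := by
        refine Finset.sum_nonpos fun j _ => mul_nonpos_of_nonneg_of_nonpos (hyp j).1 ?_
        have := abs_le.1 (hfeas j)
        rw [gPf]; linarith [this.2]
      have h2 : ∑ j, ym j * gMf n m a t γ j x ≤ 0 := by
        refine Finset.sum_nonpos fun j _ => mul_nonpos_of_nonneg_of_nonpos (hym j).1 ?_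
        have := abs_le.1 (hfeas j)
        rw [gMf]; linarith [this.1]
      rw [lagf]; linarith
    exact hfx.trans (le_ciSup (lag_bddAbove a t hγn hc0 hyp hym) ⟨x, hx⟩)
  · -- Part 2
    have hXconv : Convex ℝ X := (entS_concave n).1
    set g : (Fin m ⊕ Fin m) → (Fin n → ℝ) → ℝ :=
      fun k => Sum.elim (gPf n m a t γ) (gMf n m a t γ) k with hg
    have key : ∀ (j : Fin m) (x₁ x₂ : Fin n → ℝ) (p q : ℝ),
        (∑ i, a j i * (p • x₁ + q • x₂) i)
          = p * (∑ i, a j i * x₁ i) + q * (∑ i, a j i * x₂ i) := by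
      intro j x₁ x₂ p q
      rw [Finset.mul_sum, Finset.mul_sum, ← Finset.sum_add_distrib]
      refine Finset.sum_congr rfl fun i _ => ?_
      simp only [Pi.add_apply, Pi.smul_apply, smul_eq_mul]; ring
    have hgaff : ∀ k, ∀ x₁ x₂ : Fin n → ℝ, ∀ p q : ℝ, p + q = 1 →
        g k (p • x₁ + q • x₂) = p * g k x₁ + q * g k x₂ := by
      intro k x₁ x₂ p q hpq
      cases k with
      | inl j =>
        simp only [hg, Sum.elim_inl, gPf]
        rw [key j x₁ x₂ p q, show q = 1 - p by linarith]; ring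
      | inr j =>
        simp only [hg, Sum.elim_inr, gMf]
        rw [key j x₁ x₂ p q, show q = 1 - p by linarith]; ring
    -- violation bound
    have hKn : (K / γ) * (γ * (n:ℝ)) = K * n := by field_simp
    have hviol : ∀ x ∈ X, (∃ j, 2 * γ * (n:ℝ) < |(∑ i, a j i * x i) - t j|) →
        entS n x ≤ -((K - 1) * (n:ℝ)) + (K / γ) * ∑ k, max (g k x) 0 := by
      intro x hx ⟨j, hj⟩
      have hk : ∃ k, γ * (n:ℝ) ≤ g k x := by
        rcases le_or_gt 0 ((∑ i, a j i * x i) - t j) with h | h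
        · refine ⟨Sum.inl j, ?_⟩
          rw [abs_of_nonneg h] at hj
          simp only [hg, Sum.elim_inl, gPf]; linarith
        · refine ⟨Sum.inr j, ?_⟩
          rw [abs_of_neg h] at hj
          simp only [hg, Sum.elim_inr, gMf]; linarith
      obtain ⟨k, hk⟩ := hk
      have hsum : γ * (n:ℝ) ≤ ∑ k, max (g k x) 0 :=
        le_trans (hk.trans (le_max_left _ 0))
          (Finset.single_le_sum (fun k _ => le_max_right (g k x) 0) (Finset.mem_univ k))
      have h5 : (K / γ) * (γ * (n:ℝ)) ≤ (K / γ) * ∑ k, max (g k x) 0 :=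
        mul_le_mul_of_nonneg_left hsum hc0
      have h6 := entS_le n x
      have h7 : (n:ℝ) * Real.log 2 ≤ (n:ℝ) * 1 :=
        mul_le_mul_of_nonneg_left log_two_le_one (Nat.cast_nonneg n)
      rw [hKn] at h5
      linarith
    have hpen_nonneg : ∀ x : Fin n → ℝ, 0 ≤ ∑ k, max (g k x) 0 :=
      fun x => Finset.sum_nonneg fun k _ => le_max_right _ _
    -- common finishing step given pointwise bound
    have finish : ∀ M : ℝ,
        (∀ x ∈ X, entS n x ≤ M + (K / γ) * ∑ k, max (g k x) 0) →
        boundedDualVal n m a t γ K ≤ M := by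
      intro M hpt
      obtain ⟨y, hybox, hyL⟩ := minimax_core X hXconv hXne (entS n) (entS_concave n)
        g hgaff (K / γ) M hc0 hpt
      set yp : Fin m → ℝ := fun j => y (Sum.inl j) with hyp
      set ym : Fin m → ℝ := fun j => y (Sum.inr j) with hym
      have hyok : ∀ x, x ∈ X → lagf n m a t γ yp ym x ≤ M := by
        intro x hx
        have h0 := hyL x hx
        rw [Fintype.sum_sum_type] at h0
        simp only [hg, Sum.elim_inl, Sum.elim_inr] at h0
        rw [lagf]
        have : (∑ i, binH ((1 + x i) / 2)) = entS n x := rfl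
        rw [this]
        linarith
      have hmem : (⨆ x : {x : Fin n → ℝ // ∀ i, |x i| ≤ 1},
          lagf n m a t γ yp ym x.1) ∈ Q :=
        ⟨yp, ym, fun j => hybox (Sum.inl j), fun j => hybox (Sum.inr j), rfl⟩
      have h1 : boundedDualVal n m a t γ K ≤ _ := hdual ▸ csInf_le hQbdd hmem
      exact h1.trans (ciSup_le fun x => hyok x.1 x.2)
    by_cases hfeas2 : ∃ x : Fin n → ℝ, (∀ i, |x i| ≤ 1) ∧
        (∀ j, |(∑ i, a j i * x i) - t j| ≤ 2 * γ * (n:ℝ))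
    · -- Case B : 2γ-feasible
      obtain ⟨x₀, hx₀, hx₀f⟩ := hfeas2
      set R : Set ℝ := {r | ∃ x : Fin n → ℝ, (∀ i, |x i| ≤ 1) ∧
        (∀ j, |(∑ i, a j i * x i) - t j| ≤ 2 * γ * (n:ℝ)) ∧ r = entS n x} with hR
      have hRne : R.Nonempty := ⟨entS n x₀, x₀, hx₀, hx₀f, rfl⟩
      have hRbdd : BddAbove R := by
        refine ⟨(n:ℝ) * Real.log 2, ?_⟩
        rintro r ⟨x, _, _, rfl⟩
        exact entS_le n x
      set M : ℝ := max (sSup R) (-((K - 1) * (n:ℝ))) with hM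
      have hpt : ∀ x ∈ X, entS n x ≤ M + (K / γ) * ∑ k, max (g k x) 0 := by
        intro x hx
        by_cases hx2 : ∀ j, |(∑ i, a j i * x i) - t j| ≤ 2 * γ * (n:ℝ)
        · have h1 : entS n x ≤ sSup R := le_csSup hRbdd ⟨x, hx, hx2, rfl⟩
          have h2 : sSup R ≤ M := le_max_left _ _
          have h3 : 0 ≤ (K / γ) * ∑ k, max (g k x) 0 :=
            mul_nonneg hc0 (hpen_nonneg x)
          linarith
        · push_neg at hx2
          obtain ⟨j, hj⟩ := hx2
          have h1 := hviol x hx ⟨j, hj⟩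
          have h2 : -((K - 1) * (n:ℝ)) ≤ M := le_max_right _ _
          linarith
      have hfin := finish M hpt
      -- compare M with the RHS
      have hMle : (M : EReal) ≤ max (maxEntVal n m a t (2 * γ))
          (((-((K - 1) * (n:ℝ)) : ℝ)) : EReal) := by
        rcases max_cases (sSup R) (-((K - 1) * (n:ℝ))) with ⟨hMeq, _⟩ | ⟨hMeq, _⟩
        · rw [hM, hMeq]
          refine le_trans ?_ (le_max_left _ _)
          have hV1 : ∀ r ∈ R, (r : EReal) ≤ maxEntVal n m a t (2 * γ) := by
            rintro r ⟨x, hx1, hx2, rfl⟩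
            exact le_sSup ⟨x, hx1, hx2, rfl⟩
          have hV2 : maxEntVal n m a t (2 * γ) ≤ (((n:ℝ) * Real.log 2 : ℝ) : EReal) := by
            refine sSup_le ?_
            rintro v ⟨x, _, _, rfl⟩
            exact EReal.coe_le_coe_iff.2 (entS_le n x)
          have hVbot : ((entS n x₀ : ℝ) : EReal) ≤ maxEntVal n m a t (2 * γ) :=
            hV1 _ ⟨x₀, hx₀, hx₀f, rfl⟩
          have hne_top : maxEntVal n m a t (2 * γ) ≠ ⊤ :=
            ne_top_of_le_ne_top (EReal.coe_ne_top _) hV2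
          have hne_bot : maxEntVal n m a t (2 * γ) ≠ ⊥ := by
            intro h
            rw [h] at hVbot
            simp at hVbot
          obtain ⟨s, hs⟩ : ∃ s : ℝ, maxEntVal n m a t (2 * γ) = (s : EReal) :=
            ⟨_, (EReal.coe_toReal hne_top hne_bot).symm⟩
          rw [hs]
          refine EReal.coe_le_coe_iff.2 (csSup_le hRne fun r hr => ?_)
          have := hV1 r hr
          rw [hs] at this
          exact EReal.coe_le_coe_iff.1 this
        · rw [hM, hMeq]
          exact le_max_right _ _
      exact le_trans (EReal.coe_le_coe_iff.2 hfin) hMle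
    · -- Case A : infeasible even at 2γ
      have hpt : ∀ x ∈ X, entS n x ≤ -((K - 1) * (n:ℝ)) + (K / γ) * ∑ k, max (g k x) 0 := by
        intro x hx
        have : ∃ j, 2 * γ * (n:ℝ) < |(∑ i, a j i * x i) - t j| := by
          by_contra hcon
          push_neg at hcon
          exact hfeas2 ⟨x, hx, hcon⟩
        exact hviol x hx this
      have hfin := finish _ hpt
      exact le_trans (EReal.coe_le_coe_iff.2 hfin) (le_max_right _ _)
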